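/- For every natural number n ≥ 1, the Wallis ratio satisfies 1/√(π(n + 4/π − 1)) ≤ (2n−1)!!/(2n)!! ≤ 1/√(π(n + 1/4)). -/

import Mathlib

open Real Filter Topology

/-- The Wallis ratio W(n) = (2n-1)!!/(2n)!!. -/
noncomputable def W (n : ℕ) : ℝ :=
  (∏ k ∈ Finset.range n, (2 * (k : ℝ) + 1)) / (∏ k ∈ Finset.range n, (2 * (k : ℝ) + 2))

lemma W_pos (n : ℕ) : 0 < W n := by
  apply div_pos <;> exact Finset.prod_pos (fun k _ => by positivity)

lemma W_succ (n : ℕ) : W (n + 1) = W n * ((2 * n + 1) / (2 * n + 2)) := by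
  unfold W
  rw [Finset.prod_range_succ, Finset.prod_range_succ]
  rw [div_mul_div_comm]

lemma W_key (n : ℕ) : (W n) ^ 2 * (2 * n + 1) * Real.Wallis.W n = 1 := by
  induction n with
  | zero => simp [W, Real.Wallis.W]
  | succ n ih =>
    rw [W_succ, Real.Wallis.W_succ]
    have h1 : (2 * (n : ℝ) + 1) ≠ 0 := by positivity
    have h2 : (2 * (n : ℝ) + 2) ≠ 0 := by positivity
    have h3 : (2 * (n : ℝ) + 3) ≠ 0 := by positivity
    push_cast
    field_simp
    linear_combination (2*(n:ℝ)+3) * ih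

lemma g_tendsto (c : ℝ) :
    Filter.Tendsto (fun n : ℕ => π * ((n : ℝ) + c) * (W n) ^ 2) atTop (𝓝 1) := by
  have h2n : Filter.Tendsto (fun n : ℕ => 2 * (n : ℝ) + 1) atTop atTop := by
    apply Filter.Tendsto.atTop_add _ (tendsto_const_nhds : Filter.Tendsto (fun _ : ℕ => (1:ℝ)) atTop (𝓝 1))
    exact Filter.Tendsto.const_mul_atTop two_pos tendsto_natCast_atTop_atTop
  have h0 : Filter.Tendsto (fun n : ℕ => π * (c - 1/2) / (2 * (n:ℝ) + 1)) atTop (𝓝 0) :=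
    tendsto_const_nhds.div_atTop h2n
  have h1 : Filter.Tendsto (fun n : ℕ => π * ((n:ℝ) + c) / (2 * n + 1)) atTop (𝓝 (π/2)) := by
    have h := h0.const_add (π/2)
    rw [add_zero] at h
    refine h.congr fun n => ?_
    have hne : (2:ℝ)*n+1 ≠ 0 := by positivity
    field_simp
    ring
  have h := h1.div Real.Wallis.tendsto_W_nhds_pi_div_two (ne_of_gt Real.pi_div_two_pos)
  rw [div_self (ne_of_gt Real.pi_div_two_pos)] at h
  refine h.congr fun n => ?_
  have hk := W_key n
  have hW : Real.Wallis.W n ≠ 0 := ne_of_gt (Real.Wallis.W_pos n)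
  have h1' : (2:ℝ)*n+1 ≠ 0 := by positivity
  rw [Pi.div_apply]
  field_simp
  linear_combination (-((n:ℝ)+c)) * hk

lemma g_step (c : ℝ) (n : ℕ) :
    π * (((n:ℝ)+1) + c) * (W (n+1))^2 - π * ((n:ℝ) + c) * (W n)^2
      = π * (W n)^2 / (2*n+2)^2 * ((1-4*c)*n + (1-3*c)) := by
  rw [W_succ]
  have hne : (2*(n:ℝ)+2) ≠ 0 := by positivity
  field_simp
  ring

lemma g_upper (n : ℕ) : π * ((n:ℝ) + 1/4) * (W n)^2 ≤ 1 := by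
  have mono : Monotone (fun n : ℕ => π * ((n:ℝ) + 1/4) * (W n)^2) := by
    apply monotone_nat_of_le_succ
    intro m
    have h := g_step (1/4) m
    have hq : 0 < π * (W m)^2 / (2*(m:ℝ)+2)^2 := by
      have := W_pos m; have := Real.pi_pos; positivity
    push_cast
    nlinarith [h, hq]
  exact mono.ge_of_tendsto (g_tendsto (1/4)) n

lemma g_one : 1 ≤ π * ((1:ℝ) + (4/π - 1)) * (W 1)^2 := by
  have hW1 : W 1 = 1/2 := by simp [W]
  rw [hW1]
  have hπ : π ≠ 0 := Real.pi_ne_zero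
  field_simp
  norm_num

lemma g_lower (n : ℕ) (hn : 1 ≤ n) : 1 ≤ π * ((n:ℝ) + (4/π - 1)) * (W n)^2 := by
  rcases eq_or_lt_of_le hn with h1 | h2
  · rw [← h1]; exact_mod_cast g_one
  · -- n ≥ 2 : sequence is antitone from n on, with limit 1
    have h2' : 2 ≤ n := h2
    have key : ∀ m, n ≤ m →
        π * ((m:ℝ) + (4/π - 1)) * (W m)^2 ≤ π * ((n:ℝ) + (4/π - 1)) * (W n)^2 := by
      intro m hm
      induction m, hm using Nat.le_induction with
      | base => exact le_refl _
      | succ m hm ih =>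
        refine le_trans ?_ ih
        have h := g_step (4/π - 1) m
        have hm2 : (2:ℝ) ≤ (m:ℝ) := by exact_mod_cast le_trans h2' hm
        have hπ := Real.pi_pos
        have hπ' := Real.pi_lt_d6
        have h4t : 14/11 ≤ 4/π := by
          rw [le_div_iff₀ hπ]; nlinarith
        have hneg : (1-4*(4/π-1))*(m:ℝ) + (1-3*(4/π-1)) ≤ 0 := by
          nlinarith [mul_nonneg (by linarith : (0:ℝ) ≤ 4*(4/π) - 5)
            (by linarith : (0:ℝ) ≤ (m:ℝ) - 2)]
        have hq : 0 ≤ π * (W m)^2 / (2*(m:ℝ)+2)^2 := by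
          have := W_pos m; positivity
        push_cast
        nlinarith [h, mul_nonpos_of_nonneg_of_nonpos hq hneg]
    have := g_tendsto (4/π - 1)
    refine le_of_tendsto this ?_
    filter_upwards [Filter.eventually_ge_atTop n] with m hm using key m hm

theorem wallis_chen_qi (n : ℕ) (hn : 1 ≤ n) :
    1 / Real.sqrt (π * ((n : ℝ) + 4 / π - 1)) ≤ W n ∧
    W n ≤ 1 / Real.sqrt (π * ((n : ℝ) + 1 / 4)) := by
  have hπ := Real.pi_pos
  have hn1 : (1:ℝ) ≤ (n:ℝ) := by exact_mod_cast hn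
  have hWpos := W_pos n
  have hc : (0:ℝ) < 4/π - 1 := by
    rw [lt_sub_iff_add_lt, zero_add, lt_div_iff₀ hπ]
    nlinarith [Real.pi_lt_d6]
  have hlo : (0:ℝ) < π * ((n:ℝ) + 4/π - 1) := by nlinarith
  have hup : (0:ℝ) < π * ((n:ℝ) + 1/4) := by nlinarith
  constructor
  · have h := g_lower n hn
    have h2 : 1 / (π * ((n:ℝ) + 4/π - 1)) ≤ (W n)^2 := by
      rw [div_le_iff₀ hlo]
      nlinarith [h]
    calc 1 / Real.sqrt (π * ((n:ℝ) + 4/π - 1))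
        = Real.sqrt (1 / (π * ((n:ℝ) + 4/π - 1))) := by
          simp only [one_div, Real.sqrt_inv]
      _ ≤ Real.sqrt ((W n)^2) := Real.sqrt_le_sqrt h2
      _ = W n := Real.sqrt_sq hWpos.le
  · have h := g_upper n
    have h2 : (W n)^2 ≤ 1 / (π * ((n:ℝ) + 1/4)) := by
      rw [le_div_iff₀ hup]
      nlinarith [h]
    calc W n = Real.sqrt ((W n)^2) := (Real.sqrt_sq hWpos.le).symm
      _ ≤ Real.sqrt (1 / (π * ((n:ℝ) + 1/4))) := Real.sqrt_le_sqrt h2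
      _ = 1 / Real.sqrt (π * ((n:ℝ) + 1/4)) := by
          simp only [one_div, Real.sqrt_inv]
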